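/- Let R be a regular ring, L a local ring, and M an (R,L)-bimodule. Then every element (r, m; 0, l) of the formal triangular matrix ring (R, M; 0, L) with l a unit of L is regular; consequently the formal triangular matrix ring (R, M; 0, L) is a VNL ring. -/

import Mathlib

/-- An element `a` of a ring is (von Neumann) regular if `a = a * x * a` for some `x`. -/
def IsVNRegular {R : Type*} [Ring R] (a : R) : Prop := ∃ x : R, a = a * x * a

/-- A ring is VNL if for every `a`, either `a` or `1 - a` is regular. -/
def IsVNLRing (R : Type*) [Ring R] : Prop :=
  ∀ a : R, IsVNRegular a ∨ IsVNRegular (1 - a)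

/-- The formal triangular matrix ring `(R, M; 0, S)`: elements are triples `(a, m, b)`. -/
@[ext]
structure Tri (R M S : Type*) where
  a : R
  m : M
  b : S

namespace Tri

set_option linter.unusedSectionVars false

variable {R M S : Type*} [Ring R] [Ring S] [AddCommGroup M]
  [Module R M] [Module Sᵐᵒᵖ M] [SMulCommClass R Sᵐᵒᵖ M]

instance : Add (Tri R M S) := ⟨fun x y => ⟨x.a + y.a, x.m + y.m, x.b + y.b⟩⟩
instance : Zero (Tri R M S) := ⟨⟨0, 0, 0⟩⟩
instance : Neg (Tri R M S) := ⟨fun x => ⟨-x.a, -x.m, -x.b⟩⟩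
instance : One (Tri R M S) := ⟨⟨1, 0, 1⟩⟩
instance : Mul (Tri R M S) :=
  ⟨fun x y => ⟨x.a * y.a, x.a • y.m + MulOpposite.op y.b • x.m, x.b * y.b⟩⟩

@[simp] lemma add_a (x y : Tri R M S) : (x + y).a = x.a + y.a := rfl
@[simp] lemma add_m (x y : Tri R M S) : (x + y).m = x.m + y.m := rfl
@[simp] lemma add_b (x y : Tri R M S) : (x + y).b = x.b + y.b := rfl
@[simp] lemma zero_a : (0 : Tri R M S).a = 0 := rfl
@[simp] lemma zero_m : (0 : Tri R M S).m = 0 := rfl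
@[simp] lemma zero_b : (0 : Tri R M S).b = 0 := rfl
@[simp] lemma neg_a (x : Tri R M S) : (-x).a = -x.a := rfl
@[simp] lemma neg_m (x : Tri R M S) : (-x).m = -x.m := rfl
@[simp] lemma neg_b (x : Tri R M S) : (-x).b = -x.b := rfl
@[simp] lemma one_a : (1 : Tri R M S).a = 1 := rfl
@[simp] lemma one_m : (1 : Tri R M S).m = 0 := rfl
@[simp] lemma one_b : (1 : Tri R M S).b = 1 := rfl
@[simp] lemma mul_a (x y : Tri R M S) : (x * y).a = x.a * y.a := rfl
@[simp] lemma mul_m (x y : Tri R M S) :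
    (x * y).m = x.a • y.m + MulOpposite.op y.b • x.m := rfl
@[simp] lemma mul_b (x y : Tri R M S) : (x * y).b = x.b * y.b := rfl

instance : Sub (Tri R M S) := ⟨fun x y => ⟨x.a - y.a, x.m - y.m, x.b - y.b⟩⟩
instance : SMul ℕ (Tri R M S) := ⟨fun n x => ⟨n • x.a, n • x.m, n • x.b⟩⟩
instance : SMul ℤ (Tri R M S) := ⟨fun n x => ⟨n • x.a, n • x.m, n • x.b⟩⟩

/-- The underlying triple. -/
def toProd (x : Tri R M S) : R × M × S := (x.a, x.m, x.b)

lemma toProd_injective : Function.Injective (toProd : Tri R M S → R × M × S) := by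
  rintro ⟨a, m, b⟩ ⟨a', m', b'⟩ h
  simpa [toProd, Tri.mk.injEq, Prod.ext_iff] using h

instance : AddCommGroup (Tri R M S) :=
  toProd_injective.addCommGroup toProd rfl (fun _ _ => rfl) (fun _ => rfl)
    (fun _ _ => rfl) (fun _ _ => rfl) (fun _ _ => rfl)

instance : Ring (Tri R M S) where
  __ := (inferInstance : AddCommGroup (Tri R M S))
  mul x y := x * y
  mul_assoc x y z := by
    ext
    · simp [mul_assoc]
    · simp only [mul_m, mul_a, mul_b, smul_add, mul_smul, MulOpposite.op_mul]
      rw [smul_comm x.a (MulOpposite.op z.b) y.m]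
      abel
    · simp [mul_assoc]
  one := 1
  one_mul x := by ext <;> simp
  mul_one x := by ext <;> simp
  left_distrib x y z := by
    ext <;> simp [mul_add, smul_add, add_smul] <;> abel
  right_distrib x y z := by
    ext <;> simp [add_mul, add_smul, smul_add] <;> abel
  zero_mul x := by ext <;> simp
  mul_zero x := by ext <;> simp

end Tri


/-- If `R` is regular and `L` is local, then in the formal triangular matrix ring
`(R, M; 0, L)` every element with unit lower-right entry is regular, and the ring is VNL. -/
theorem tri_regular_local_isVNL {R M L : Type*} [Ring R] [Ring L] [IsLocalRing L]
    [AddCommGroup M] [Module R M] [Module Lᵐᵒᵖ M] [SMulCommClass R Lᵐᵒᵖ M]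
    (hR : ∀ a : R, IsVNRegular a) :
    (∀ t : Tri R M L, IsUnit t.b → IsVNRegular t) ∧ IsVNLRing (Tri R M L) := by
  have key : ∀ t : Tri R M L, IsUnit t.b → IsVNRegular t := by
    rintro ⟨r, m, l⟩ hl
    obtain ⟨v, rfl⟩ := hl
    obtain ⟨x, hx⟩ := hR r
    refine ⟨⟨x, -((MulOpposite.op ((↑v⁻¹ : L))) • (x • m)), (↑v⁻¹ : L)⟩, ?_⟩
    ext
    · simpa using hx
    · simp only [Tri.mul_m, Tri.mul_a, Tri.mul_b, smul_add, smul_neg, mul_smul]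
      have h1 : (MulOpposite.op (↑v : L)) • (MulOpposite.op ((↑v⁻¹ : L))) • (r • x • m)
          = r • x • m := by
        rw [← mul_smul, ← MulOpposite.op_mul, Units.inv_mul, MulOpposite.op_one, one_smul]
      have h2 : (MulOpposite.op ((↑v : L))) • (MulOpposite.op ((↑v⁻¹ : L))) • m = m := by
        rw [← mul_smul, ← MulOpposite.op_mul, Units.inv_mul, MulOpposite.op_one, one_smul]
      rw [smul_comm r (MulOpposite.op ((↑v⁻¹ : L))), h1, h2]
      abel
    · show (↑v : L) = ↑v * ↑v⁻¹ * ↑v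
      rw [mul_assoc, Units.inv_mul, mul_one]
  refine ⟨key, fun t => ?_⟩
  rcases IsLocalRing.isUnit_or_isUnit_of_add_one (a := t.b) (b := 1 - t.b) (by abel) with h | h
  · exact Or.inl (key t h)
  · exact Or.inr (key (1 - t) (by exact h))
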